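/- Let (Ω, P) be a probability space, a c : ℕ, and let X : Ω → (Fin a → ℝ) and E : Ω → (Fin c → ℝ) be random vectors whose components are all square-integrable (MemLp 2 with respect to P). Let Σ : Matrix (Fin a) (Fin a) ℝ and D : Matrix (Fin c) (Fin c) ℝ be such that covariance (fun ω => X ω i) (fun ω => X ω i') P = Σ i i' for all i i', covariance (fun ω => E ω j) (fun ω => E ω j') P = D j j' for all j j', and E is uncorrelated with X: covariance (fun ω => X ω i) (fun ω => E ω j) P = 0 for all i, j. Let B : Matrix (Fin c) (Fin a) ℝ and μX : Fin a → ℝ, μnew : Fin c → ℝ, and define the new variate field Ynew : Ω → (Fin c → ℝ) by Ynew ω := μnew + B *ᵥ (X ω - μX) + E ω. Then the covariance matrix of the stacked random vector W : Ω → (Fin a ⊕ Fin c → ℝ), W ω := Sum.elim (X ω) (Ynew ω), equals Matrix.fromBlocks Σ (Σ * Bᵀ) (B * Σ) (B * Σ * Bᵀ + D); that is, for all u v : Fin a ⊕ Fin c, covariance (fun ω => W ω u) (fun ω => W ω v) P = (Matrix.fromBlocks Σ (Σ * Bᵀ) (B * Σ) (B * Σ * Bᵀ + D)) u v. -/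

import Mathlib

open MeasureTheory Matrix

/-- Covariance of two real-valued random variables:
`covariance X Y P = ∫ (X − E[X])·(Y − E[Y]) dP`. -/
noncomputable def covariance {Ω : Type*} [MeasurableSpace Ω] (X Y : Ω → ℝ)
    (P : Measure Ω) : ℝ :=
  ∫ ω, (X ω - ∫ ω', X ω' ∂P) * (Y ω - ∫ ω', Y ω' ∂P) ∂P

section CovHelpers

variable {Ω : Type*} [MeasurableSpace Ω] {P : Measure Ω} [IsProbabilityMeasure P]

private lemma one_div_one_eq : (1:ENNReal)/1 = 1/2 + 1/2 := by
  rw [ENNReal.div_add_div_same, one_add_one_eq_two,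
    ENNReal.div_self two_ne_zero ENNReal.ofNat_ne_top, div_one]

lemma memLp2_mul_integrable {f g : Ω → ℝ} (hf : MemLp f 2 P) (hg : MemLp g 2 P) :
    Integrable (fun ω => f ω * g ω) P := by
  have : MemLp (f • g) 1 P := hg.smul (r := 1) hf
  exact this.integrable le_rfl

lemma memLp2_centered {f : Ω → ℝ} (hf : MemLp f 2 P) :
    MemLp (fun ω => f ω - ∫ ω', f ω' ∂P) 2 P := by
  exact hf.sub (memLp_const (∫ ω', f ω' ∂P))

lemma cov_comm (f g : Ω → ℝ) : covariance f g P = covariance g f P := by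
  unfold covariance
  simp_rw [mul_comm]

lemma cov_add_left {f g h : Ω → ℝ} (hf : MemLp f 2 P) (hg : MemLp g 2 P)
    (hh : MemLp h 2 P) :
    covariance (fun ω => f ω + g ω) h P = covariance f h P + covariance g h P := by
  have hfc := memLp2_centered hf
  have hgc := memLp2_centered hg
  have hhc := memLp2_centered hh
  unfold covariance
  rw [integral_add (hf.integrable one_le_two) (hg.integrable one_le_two)]
  have key : ∀ ω, (f ω + g ω - ((∫ ω', f ω' ∂P) + ∫ ω', g ω' ∂P)) * (h ω - ∫ ω', h ω' ∂P)
      = (f ω - ∫ ω', f ω' ∂P) * (h ω - ∫ ω', h ω' ∂P)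
        + (g ω - ∫ ω', g ω' ∂P) * (h ω - ∫ ω', h ω' ∂P) := fun ω => by ring
  simp_rw [key]
  exact integral_add (memLp2_mul_integrable hfc hhc) (memLp2_mul_integrable hgc hhc)

lemma cov_const_mul_left (r : ℝ) {f : Ω → ℝ} (g : Ω → ℝ) (hf : MemLp f 2 P) :
    covariance (fun ω => r * f ω) g P = r * covariance f g P := by
  unfold covariance
  rw [integral_const_mul]
  have key : ∀ ω, (r * f ω - r * ∫ ω', f ω' ∂P) * (g ω - ∫ ω', g ω' ∂P)
      = r * ((f ω - ∫ ω', f ω' ∂P) * (g ω - ∫ ω', g ω' ∂P)) := fun ω => by ring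
  simp_rw [key]
  exact integral_const_mul r _

lemma cov_const_add_left (k : ℝ) {f : Ω → ℝ} (g : Ω → ℝ) (hf : MemLp f 2 P) :
    covariance (fun ω => k + f ω) g P = covariance f g P := by
  unfold covariance
  rw [integral_add (integrable_const k) (hf.integrable one_le_two), integral_const]
  simp only [probReal_univ, measure_univ, ENNReal.toReal_one, smul_eq_mul, one_mul]
  congr 1
  funext ω
  ring

lemma cov_zero_left (g : Ω → ℝ) : covariance (fun _ => (0:ℝ)) g P = 0 := by
  unfold covariance
  simp

lemma cov_sum_left {ι : Type*} (s : Finset ι) (F : ι → Ω → ℝ) (g : Ω → ℝ)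
    (hF : ∀ i, MemLp (F i) 2 P) (hg : MemLp g 2 P) :
    covariance (fun ω => ∑ i ∈ s, F i ω) g P = ∑ i ∈ s, covariance (F i) g P := by
  classical
  induction s using Finset.induction_on with
  | empty => simpa using cov_zero_left (P := P) g
  | insert _ _ hx ih =>
    rename_i x s
    rw [Finset.sum_insert hx]
    have hsum : MemLp (fun ω => ∑ i ∈ s, F i ω) 2 P := by
      simpa using memLp_finset_sum s (fun i _ => hF i)
    have := cov_add_left (P := P) (hF x) hsum hg
    simp only [Finset.sum_insert hx]
    rw [← ih]
    exact this

end CovHelpers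

theorem induction_step_joint_covariance
    {Ω : Type*} [MeasurableSpace Ω] (P : Measure Ω) [IsProbabilityMeasure P]
    (a c : ℕ) (X : Ω → Fin a → ℝ) (E : Ω → Fin c → ℝ)
    (hXsq : ∀ i : Fin a, MemLp (fun ω => X ω i) 2 P)
    (hEsq : ∀ j : Fin c, MemLp (fun ω => E ω j) 2 P)
    (Sg : Matrix (Fin a) (Fin a) ℝ) (D : Matrix (Fin c) (Fin c) ℝ)
    (hXcov : ∀ i i' : Fin a,
      covariance (fun ω => X ω i) (fun ω => X ω i') P = Sg i i')
    (hEcov : ∀ j j' : Fin c,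
      covariance (fun ω => E ω j) (fun ω => E ω j') P = D j j')
    (hXE : ∀ (i : Fin a) (j : Fin c),
      covariance (fun ω => X ω i) (fun ω => E ω j) P = 0)
    (B : Matrix (Fin c) (Fin a) ℝ) (μX : Fin a → ℝ) (μnew : Fin c → ℝ)
    (Ynew : Ω → Fin c → ℝ)
    (hYnew : ∀ ω, Ynew ω = μnew + B *ᵥ (X ω - μX) + E ω)
    (W : Ω → (Fin a ⊕ Fin c) → ℝ)
    (hW : ∀ ω, W ω = Sum.elim (X ω) (Ynew ω)) :
    ∀ u v : Fin a ⊕ Fin c,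
      covariance (fun ω => W ω u) (fun ω => W ω v) P =
        (Matrix.fromBlocks Sg (Sg * Bᵀ) (B * Sg) (B * Sg * Bᵀ + D)) u v := by
  classical
  -- rewrite Ynew in a convenient form
  have hY : ∀ j, (fun ω => Ynew ω j)
      = fun ω => (μnew j - ∑ k, B j k * μX k)
          + ((∑ k, B j k * X ω k) + E ω j) := by
    intro j
    funext ω
    rw [hYnew]
    simp only [Pi.add_apply, Matrix.mulVec, dotProduct, Pi.sub_apply, mul_sub,
      Finset.sum_sub_distrib]
    ring
  have hsumLp : ∀ j : Fin c, MemLp (fun ω => ∑ k, B j k * X ω k) 2 P := by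
    intro j
    simpa using memLp_finset_sum Finset.univ
      (fun k (_ : k ∈ Finset.univ) => (hXsq k).const_mul (B j k))
  have hse : ∀ j : Fin c, MemLp (fun ω => (∑ k, B j k * X ω k) + E ω j) 2 P :=
    fun j => (hsumLp j).add (hEsq j)
  have hYLp : ∀ j : Fin c, MemLp (fun ω => Ynew ω j) 2 P := by
    intro j
    rw [hY j]
    exact (memLp_const (μnew j - ∑ k, B j k * μX k)).add (hse j)
  -- covariance of anything (square-integrable) with Ynew j
  have key : ∀ (f : Ω → ℝ), MemLp f 2 P → ∀ j : Fin c,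
      covariance f (fun ω => Ynew ω j) P
        = (∑ k, B j k * covariance f (fun ω => X ω k) P)
          + covariance f (fun ω => E ω j) P := by
    intro f hf j
    rw [cov_comm, hY j, cov_const_add_left _ _ (hse j),
      cov_add_left (hsumLp j) (hEsq j) hf,
      cov_sum_left Finset.univ (fun k ω => B j k * X ω k) f
        (fun k => (hXsq k).const_mul (B j k)) hf]
    congr 1
    · refine Finset.sum_congr rfl fun k _ => ?_
      rw [cov_const_mul_left _ _ (hXsq k), cov_comm]
    · rw [cov_comm]
  -- symmetry of Sg and D
  have hSg : ∀ i k, Sg i k = Sg k i := fun i k => by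
    rw [← hXcov, cov_comm, hXcov]
  have hD : ∀ j j', D j j' = D j' j := fun j j' => by
    rw [← hEcov, cov_comm, hEcov]
  have hXEcomm : ∀ (j : Fin c) (i : Fin a),
      covariance (fun ω => E ω j) (fun ω => X ω i) P = 0 := fun j i => by
    rw [cov_comm]; exact hXE i j
  intro u v
  have hWl : ∀ i : Fin a, (fun ω => W ω (Sum.inl i)) = fun ω => X ω i :=
    fun i => funext fun ω => by rw [hW]; rfl
  have hWr : ∀ j : Fin c, (fun ω => W ω (Sum.inr j)) = fun ω => Ynew ω j :=
    fun j => funext fun ω => by rw [hW]; rfl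
  -- covariance of Ynew j with X i
  have hYX : ∀ (j : Fin c) (i : Fin a),
      covariance (fun ω => Ynew ω j) (fun ω => X ω i) P = (B * Sg) j i := by
    intro j i
    rw [cov_comm, key _ (hXsq i) j, hXE i j, add_zero]
    simp only [Matrix.mul_apply]
    refine Finset.sum_congr rfl fun k _ => ?_
    rw [hXcov, hSg i k]
  cases u with
  | inl i =>
    cases v with
    | inl i' =>
      rw [hWl i, hWl i']
      simpa [Matrix.fromBlocks_apply₁₁] using hXcov i i'
    | inr j =>
      rw [hWl i, hWr j, cov_comm, hYX j i, Matrix.fromBlocks_apply₁₂,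
        Matrix.mul_apply, Matrix.mul_apply]
      refine Finset.sum_congr rfl fun k _ => ?_
      rw [Matrix.transpose_apply, hSg i k]; ring
  | inr j =>
    cases v with
    | inl i =>
      rw [hWr j, hWl i]
      simpa [Matrix.fromBlocks_apply₂₁] using hYX j i
    | inr j' =>
      rw [hWr j, hWr j', key _ (hYLp j) j']
      have hYE : covariance (fun ω => Ynew ω j) (fun ω => E ω j') P = D j j' := by
        rw [cov_comm, key _ (hEsq j') j]
        simp only [hXEcomm, mul_zero, Finset.sum_const_zero, zero_add]
        rw [hEcov, hD j' j]
      rw [hYE, Matrix.fromBlocks_apply₂₂, Matrix.add_apply]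
      congr 1
      · rw [Matrix.mul_apply]
        refine Finset.sum_congr rfl fun k _ => ?_
        rw [hYX j k, Matrix.transpose_apply, mul_comm]
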